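/- Define a process (X_n)_{n≥0} with X_0 = 0, together with times N_k^E, N_k^W, as follows: N_1^E = 0; N_k^W = inf{n ≥ N_k^E : X_n = 1} and N_{k+1}^E = inf{n ≥ N_k^W : X_n = 0} (with inf ∅ = ∞); and for n ≥ 1, X_n − X_{n−1} = L_{n−1} − L_n if N_k^E < n ≤ N_k^W for some k, while X_n − X_{n−1} = R_n − R_{n−1} if N_k^W < n ≤ N_{k+1}^E for some k. (This recursion is well defined, since whether n lies in one of these intervals is determined by X_0, …, X_{n−1}.) Then the increments (X_n − X_{n−1})_{n≥1} are independent and identically distributed, each uniformly distributed on {−1, 0, 1}; in particular, the process X has the same law as the random walk L. -/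

import Mathlib

open MeasureTheory ProbabilityTheory Filter Topology
open scoped ENNReal NNReal

namespace Stmt1Aux

/-- weight function of the uniform distribution on `{-1,0,1}` -/
noncomputable def w (d : ℤ) : ℝ≥0∞ := if d = -1 ∨ d = 0 ∨ d = 1 then 3⁻¹ else 0

/-- one step of the excursion state machine; `s = true` means "W phase". -/
def step (s : Bool) (x : ℤ) (e : ℤ × ℤ) : Bool × ℤ :=
  (if s then !(decide (x + (if s then -e.1 else e.2) = 1))
    else decide (x + (if s then -e.1 else e.2) = 0),
   x + (if s then -e.1 else e.2))

/-- the state after `n` steps, driven by `a 0, …, a (n-1)`. -/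
def run (a : ℕ → ℤ × ℤ) : ℕ → Bool × ℤ
  | 0 => (true, 0)
  | n+1 => step (run a n).1 (run a n).2 (a n)

/-- the increment functional. -/
def inc (n : ℕ) (a : ℕ → ℤ × ℤ) : ℤ := if (run a n).1 then -(a n).1 else (a n).2

lemma run_congr {a b : ℕ → ℤ × ℤ} : ∀ {n : ℕ}, (∀ j, j < n → a j = b j) → run a n = run b n
  | 0, _ => rfl
  | n+1, h => by
      have ih : run a n = run b n := run_congr (fun j hj => h j (Nat.lt_succ_of_lt hj))
      simp only [run, ih, h n (Nat.lt_succ_self n)]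

lemma inc_congr {a b : ℕ → ℤ × ℤ} {n : ℕ} (h : ∀ j, j ≤ n → a j = b j) :
    inc n a = inc n b := by
  unfold inc
  rw [run_congr (fun j hj => h j (le_of_lt hj)), h n le_rfl]

/-- invariant during a W phase -/
def WInv (x : ℕ → ℤ) (ne : ℕ → ℕ∞) (n : ℕ) : Prop :=
  ∃ k m : ℕ, 1 ≤ k ∧ ne k = (m : ℕ∞) ∧ m ≤ n ∧ ∀ j, m ≤ j → j ≤ n → x j ≠ 1

/-- invariant during an E phase -/
def EInv (x : ℕ → ℤ) (nw : ℕ → ℕ∞) (n : ℕ) : Prop :=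
  ∃ k m : ℕ, 1 ≤ k ∧ nw k = (m : ℕ∞) ∧ m ≤ n ∧ ∀ j, m ≤ j → j ≤ n → x j ≠ 0

section Invariant

variable (a : ℕ → ℤ × ℤ) (x : ℕ → ℤ) (ne nw : ℕ → ℕ∞)

def Motive (n : ℕ) : Prop :=
  x n = (run a n).2 ∧ ((run a n).1 = true → WInv x ne n)
    ∧ ((run a n).1 = false → EInv x nw n)

variable {a x ne nw}

variable (hx0 : x 0 = 0) (hne1 : ne 1 = 0)
  (hnw : ∀ k, 1 ≤ k →
    nw k = sInf {m : ℕ∞ | ∃ n : ℕ, m = (n : ℕ∞) ∧ ne k ≤ (n : ℕ∞) ∧ x n = 1})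
  (hne : ∀ k, 1 ≤ k →
    ne (k + 1) = sInf {m : ℕ∞ | ∃ n : ℕ, m = (n : ℕ∞) ∧ nw k ≤ (n : ℕ∞) ∧ x n = 0})
  (hxW : ∀ n, (∃ k, 1 ≤ k ∧ ne k < ((n + 1 : ℕ) : ℕ∞) ∧ ((n + 1 : ℕ) : ℕ∞) ≤ nw k) →
    x (n + 1) - x n = -(a n).1)
  (hxE : ∀ n, (∃ k, 1 ≤ k ∧ nw k < ((n + 1 : ℕ) : ℕ∞) ∧ ((n + 1 : ℕ) : ℕ∞) ≤ ne (k + 1)) →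
    x (n + 1) - x n = (a n).2)

include hx0 hne1 hnw hne hxW hxE

lemma step_all (n : ℕ) (h : Motive a x ne nw n) :
    (x (n + 1) - x n = inc n a) ∧ Motive a x ne nw (n + 1) := by
  obtain ⟨hval, hW, hE⟩ := h
  cases hs : (run a n).1 with
  | true =>
    obtain ⟨k, m, hk, hnek, hmn, h1⟩ := hW hs
    -- every candidate time for NW k is > n
    have hnwge : ((n + 1 : ℕ) : ℕ∞) ≤ nw k := by
      rw [hnw k hk]
      refine le_sInf ?_
      rintro m' ⟨n', rfl, hle, hx1⟩
      have hmn' : m ≤ n' := by rw [hnek] at hle; exact_mod_cast hle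
      have : n + 1 ≤ n' := by
        by_contra hcon
        exact h1 n' hmn' (by omega) hx1
      exact_mod_cast this
    have hdx : x (n + 1) - x n = -(a n).1 := by
      refine hxW n ⟨k, hk, ?_, hnwge⟩
      rw [hnek]
      exact_mod_cast Nat.lt_succ_of_le hmn
    have hinc : x (n + 1) - x n = inc n a := by rw [hdx, inc, hs, if_pos rfl]
    have hval' : x (n + 1) = (run a (n + 1)).2 := by
      have : (run a (n + 1)).2 = (run a n).2 + -(a n).1 := by
        simp only [run, step, hs, if_pos]
      rw [this, ← hval]
      omega
    have hxx : (run a n).2 + -(a n).1 = x (n + 1) := by rw [← hval]; omega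
    have hbool : (run a (n + 1)).1 = !(decide (x (n + 1) = 1)) := by
      have h' : (run a (n + 1)).1
          = !(decide ((run a n).2 + -(a n).1 = 1)) := by
        simp only [run, step, hs, if_pos]
      rw [h', hxx]
    refine ⟨hinc, hval', ?_, ?_⟩
    · intro ht
      rw [hbool] at ht
      have hx1 : x (n + 1) ≠ 1 := by
        intro hc
        simp [hc] at ht
      exact ⟨k, m, hk, hnek, hmn.trans n.le_succ, fun j hmj hj => by
        rcases Nat.eq_or_lt_of_le hj with h' | h'
        · rw [h']; exact hx1
        · exact h1 j hmj (by omega)⟩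
    · intro hf
      rw [hbool] at hf
      have hx1 : x (n + 1) = 1 := by
        by_contra hc
        simp [hc] at hf
      have hnweq : nw k = ((n + 1 : ℕ) : ℕ∞) := by
        refine le_antisymm ?_ hnwge
        rw [hnw k hk]
        refine sInf_le ⟨n + 1, rfl, ?_, hx1⟩
        rw [hnek]
        exact_mod_cast hmn.trans n.le_succ
      exact ⟨k, n + 1, hk, hnweq, le_rfl, fun j hj1 hj2 => by
        have : j = n + 1 := le_antisymm hj2 hj1
        rw [this, hx1]; omega⟩
  | false =>
    obtain ⟨k, m, hk, hnwk, hmn, h0⟩ := hE hs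
    have hnege : ((n + 1 : ℕ) : ℕ∞) ≤ ne (k + 1) := by
      rw [hne k hk]
      refine le_sInf ?_
      rintro m' ⟨n', rfl, hle, hx0'⟩
      have hmn' : m ≤ n' := by rw [hnwk] at hle; exact_mod_cast hle
      have : n + 1 ≤ n' := by
        by_contra hcon
        exact h0 n' hmn' (by omega) hx0'
      exact_mod_cast this
    have hdx : x (n + 1) - x n = (a n).2 := by
      refine hxE n ⟨k, hk, ?_, hnege⟩
      rw [hnwk]
      exact_mod_cast Nat.lt_succ_of_le hmn
    have hinc : x (n + 1) - x n = inc n a := by rw [hdx, inc, hs]; simp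
    have hval' : x (n + 1) = (run a (n + 1)).2 := by
      have : (run a (n + 1)).2 = (run a n).2 + (a n).2 := by
        simp only [run, step, hs]
        simp
      rw [this, ← hval]
      omega
    have hxx : (run a n).2 + (a n).2 = x (n + 1) := by rw [← hval]; omega
    have hbool : (run a (n + 1)).1 = decide (x (n + 1) = 0) := by
      have h' : (run a (n + 1)).1 = decide ((run a n).2 + (a n).2 = 0) := by
        simp only [run, step, hs]
        simp
      rw [h', hxx]
    refine ⟨hinc, hval', ?_, ?_⟩
    · intro ht
      rw [hbool] at ht
      have hx0' : x (n + 1) = 0 := by simpa using ht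
      have hneeq : ne (k + 1) = ((n + 1 : ℕ) : ℕ∞) := by
        refine le_antisymm ?_ hnege
        rw [hne k hk]
        refine sInf_le ⟨n + 1, rfl, ?_, hx0'⟩
        rw [hnwk]
        exact_mod_cast hmn.trans n.le_succ
      exact ⟨k + 1, n + 1, le_add_self, hneeq, le_rfl, fun j hj1 hj2 => by
        have : j = n + 1 := le_antisymm hj2 hj1
        rw [this, hx0']; omega⟩
    · intro hf
      rw [hbool] at hf
      have hx0' : x (n + 1) ≠ 0 := by simpa using hf
      exact ⟨k, m, hk, hnwk, hmn.trans n.le_succ, fun j hmj hj => by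
        rcases Nat.eq_or_lt_of_le hj with h' | h'
        · rw [h']; exact hx0'
        · exact h0 j hmj (by omega)⟩

lemma motive_all : ∀ n, Motive a x ne nw n := by
  intro n
  induction n with
  | zero =>
    refine ⟨by simpa [run] using hx0, fun _ => ⟨1, 0, le_rfl, by simpa using hne1, le_rfl,
      fun j hj1 hj2 => by
        have : j = 0 := Nat.le_zero.mp hj2
        rw [this, hx0]; omega⟩, fun hcon => by simp [run] at hcon⟩
  | succ n ih => exact (step_all hx0 hne1 hnw hne hxW hxE n ih).2

lemma increment_eq (n : ℕ) : x (n + 1) - x n = inc n a :=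
  (step_all hx0 hne1 hnw hne hxW hxE n (motive_all hx0 hne1 hnw hne hxW hxE n)).1

end Invariant

/-- patch -/
def patch (n : ℕ) (v : ℕ → ℤ × ℤ) (e : ℤ × ℤ) : ℕ → ℤ × ℤ := fun j => if j = n then e else v j

/-- extend a vector by zero -/
def ext0 (n : ℕ) (v : Fin n → ℤ × ℤ) : ℕ → ℤ × ℤ := fun j => if h : j < n then v ⟨j, h⟩ else 0

variable {Ω : Type*} [MeasurableSpace Ω]

lemma meas_partition (P : Measure Ω) {γ : Type*} [Countable γ] [MeasurableSpace γ]
    [MeasurableSingletonClass γ] {V : Ω → γ} (hV : Measurable V) {E : Set Ω}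
    (hE : MeasurableSet E) : P E = ∑' v, P (E ∩ V ⁻¹' {v}) := by
  have hdec : E = ⋃ v, E ∩ V ⁻¹' {v} := by ext ω; simp
  conv_lhs => rw [hdec]
  refine measure_iUnion ?_ fun v => hE.inter (hV (measurableSet_singleton v))
  intro v v' hvv'
  simp only [Set.disjoint_left]
  rintro ω ⟨-, h1⟩ ⟨-, h2⟩
  exact hvv' ((Set.mem_preimage.mp h1).symm.trans (Set.mem_preimage.mp h2))

lemma meas_F {η : ℕ → Ω → ℤ × ℤ} (hmeas : ∀ j, Measurable (η j))
    {F : ℕ → (ℕ → ℤ × ℤ) → ℤ}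
    (hdep : ∀ n u v, (∀ j, j ≤ n → u j = v j) → F n u = F n v) (i : ℕ) :
    Measurable (fun ω => F i (fun j => η j ω)) := by
  have hrw : (fun ω => F i (fun j => η j ω))
      = (fun v : Fin (i + 1) → ℤ × ℤ => F i (ext0 (i + 1) v))
        ∘ (fun ω (j : Fin (i + 1)) => η j ω) := by
    funext ω
    exact hdep i _ _ fun j hj => by
      simp [ext0, Nat.lt_succ_of_le hj]
  rw [hrw]
  exact Measurable.of_discrete.comp (measurable_pi_lambda _ fun j => hmeas j)

lemma key_prob (P : Measure Ω) [IsProbabilityMeasure P]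
    (η : ℕ → Ω → ℤ × ℤ) (hmeas : ∀ j, Measurable (η j))
    (hind : iIndepFun η P)
    (F : ℕ → (ℕ → ℤ × ℤ) → ℤ)
    (hdep : ∀ n u v, (∀ j, j ≤ n → u j = v j) → F n u = F n v)
    (hunif : ∀ (n : ℕ) (v : ℕ → ℤ × ℤ) (d : ℤ),
      P ((η n) ⁻¹' {e | F n (patch n v e) = d}) = w d) :
    ∀ (n : ℕ) (S : Finset ℕ), S ⊆ Finset.range n → ∀ t : ℕ → ℤ,
      P (⋂ i ∈ S, {ω | F i (fun j => η j ω) = t i}) = ∏ i ∈ S, w (t i) := by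
  intro n
  induction n with
  | zero =>
    intro S hS t
    have : S = ∅ := Finset.subset_empty.mp (by simpa using hS)
    subst this
    simp
  | succ n ih =>
    intro S hS t
    by_cases hn : n ∈ S
    · set S' := S.erase n with hS'def
      have hS' : S' ⊆ Finset.range n := by
        intro i hi
        have h1 := hS (Finset.mem_of_mem_erase hi)
        have h2 := Finset.ne_of_mem_erase hi
        simp only [Finset.mem_range] at h1 ⊢
        omega
      have hSdecomp : S = insert n S' := (Finset.insert_erase hn).symm
      rw [hSdecomp, Finset.set_biInter_insert, Finset.prod_insert (Finset.notMem_erase n S)]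
      set Vn : Ω → (Fin n → ℤ × ℤ) := fun ω i => η i ω with hVndef
      have hVmeas : Measurable Vn := measurable_pi_lambda _ fun i => hmeas i
      set B : Set (Fin n → ℤ × ℤ) := {v | ∀ i ∈ S', F i (ext0 n v) = t i} with hBdef
      have hA : (⋂ i ∈ S', {ω | F i (fun j => η j ω) = t i}) = Vn ⁻¹' B := by
        ext ω
        have hrew : ∀ i ∈ S', F i (fun j => η j ω) = F i (ext0 n (Vn ω)) := by
          intro i hi
          have hin : i < n := Finset.mem_range.mp (hS' hi)
          exact hdep i _ _ fun j hj => by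
            simp [ext0, Vn, lt_of_le_of_lt hj hin]
        simp only [Set.mem_iInter, Set.mem_preimage, Set.mem_setOf_eq, hBdef]
        exact ⟨fun h i hi => (hrew i hi).symm.trans (h i hi),
          fun h i hi => (hrew i hi).trans (h i hi)⟩
      have hDn : ∀ ω, F n (fun j => η j ω) = F n (patch n (ext0 n (Vn ω)) (η n ω)) := by
        intro ω
        refine hdep n _ _ fun j hj => ?_
        rcases eq_or_lt_of_le hj with h' | h'
        · simp [patch, h']
        · simp [patch, ext0, Vn, h', Nat.ne_of_lt h']
      have hIndep : IndepFun Vn (η n) P := by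
        have h2 := hind.indepFun_finset (Finset.range n) {n}
          (by simp [Finset.disjoint_left]; omega) hmeas
        have := h2.comp (φ := fun u : (∀ i : (Finset.range n : Finset ℕ), ℤ × ℤ)
            => fun i : Fin n => u ⟨(i : ℕ), by simp [i.2]⟩)
          (ψ := fun u : (∀ i : ({n} : Finset ℕ), ℤ × ℤ) => u ⟨n, by simp⟩)
          (measurable_pi_lambda _ fun i => measurable_pi_apply _)
          (measurable_pi_apply _ : Measurable fun u : (∀ i : ({n} : Finset ℕ), ℤ × ℤ) => u ⟨n, by simp⟩)
        exact this
      have hFnmeas : Measurable (fun ω => F n (fun j => η j ω)) := meas_F hmeas hdep n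
      have hEmeas : MeasurableSet ({ω | F n (fun j => η j ω) = t n} ∩ Vn ⁻¹' B) :=
        (hFnmeas (measurableSet_singleton (t n))).inter (hVmeas MeasurableSet.of_discrete)
      rw [hA, meas_partition P hVmeas hEmeas]
      have hterm : ∀ v, P (({ω | F n (fun j => η j ω) = t n} ∩ Vn ⁻¹' B) ∩ Vn ⁻¹' {v})
          = w (t n) * P ((Vn ⁻¹' B) ∩ Vn ⁻¹' {v}) := by
        intro v
        by_cases hvB : v ∈ B
        · have h1 : (Vn ⁻¹' B) ∩ Vn ⁻¹' {v} = Vn ⁻¹' {v} := by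
            ext ω
            simp only [Set.mem_inter_iff, Set.mem_preimage, Set.mem_singleton_iff,
              and_iff_right_iff_imp]
            intro h; rw [h]; exact hvB
          have h2 : ({ω | F n (fun j => η j ω) = t n} ∩ Vn ⁻¹' B) ∩ Vn ⁻¹' {v}
              = Vn ⁻¹' {v} ∩ (η n) ⁻¹' {e | F n (patch n (ext0 n v) e) = t n} := by
            ext ω
            simp only [Set.mem_inter_iff, Set.mem_preimage, Set.mem_setOf_eq,
              Set.mem_singleton_iff]
            constructor
            · rintro ⟨⟨hF, -⟩, hv⟩
              refine ⟨hv, ?_⟩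
              rw [← hv, ← hDn ω]
              exact hF
            · rintro ⟨hv, hF⟩
              refine ⟨⟨?_, by rw [hv]; exact hvB⟩, hv⟩
              rw [hDn ω, hv]
              exact hF
          rw [h1, h2, hIndep.measure_inter_preimage_eq_mul _ _ (measurableSet_singleton v)
            MeasurableSet.of_discrete, hunif n (ext0 n v) (t n), mul_comm]
        · have h1 : (Vn ⁻¹' B) ∩ Vn ⁻¹' {v} = ∅ := by
            ext ω
            simp only [Set.mem_inter_iff, Set.mem_preimage, Set.mem_singleton_iff,
              Set.mem_empty_iff_false, iff_false, not_and]
            intro hB hv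
            rw [hv] at hB
            exact hvB hB
          have h2 : ({ω | F n (fun j => η j ω) = t n} ∩ Vn ⁻¹' B) ∩ Vn ⁻¹' {v} = ∅ := by
            rw [Set.inter_assoc, h1, Set.inter_empty]
          rw [h1, h2]
          simp
      calc ∑' v, P (({ω | F n (fun j => η j ω) = t n} ∩ Vn ⁻¹' B) ∩ Vn ⁻¹' {v})
          = ∑' v, w (t n) * P ((Vn ⁻¹' B) ∩ Vn ⁻¹' {v}) := tsum_congr hterm
        _ = w (t n) * ∑' v, P ((Vn ⁻¹' B) ∩ Vn ⁻¹' {v}) := ENNReal.tsum_mul_left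
        _ = w (t n) * P (Vn ⁻¹' B) := by
            rw [← meas_partition P hVmeas (hVmeas MeasurableSet.of_discrete)]
        _ = w (t n) * ∏ i ∈ S', w (t i) := by rw [← hA, ih S' hS' t]
    · have hS2 : S ⊆ Finset.range n := by
        intro i hi
        have h1 := hS hi
        have h2 : i ≠ n := fun h => hn (h ▸ hi)
        simp only [Finset.mem_range] at h1 ⊢
        omega
      exact ih S hS2 t

end Stmt1Aux

open Stmt1Aux

/-- Let `(ξ_j)_{j≥1}` be i.i.d. random vectors, each uniform on
`{(1,0), (0,-1), (-1,1)} ⊂ ℤ²`, and let `Z_n = (L_n, R_n) = ∑_{j=1}^n ξ_j`.  Define `X` with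
`X_0 = 0` together with times `N_k^E`, `N_k^W` by: `N_1^E = 0`,
`N_k^W = inf{n ≥ N_k^E : X_n = 1}`, `N_{k+1}^E = inf{n ≥ N_k^W : X_n = 0}` (with `inf ∅ = ∞`),
and for `n ≥ 1`: `X_n − X_{n−1} = L_{n−1} − L_n` if `N_k^E < n ≤ N_k^W` for some `k`, while
`X_n − X_{n−1} = R_n − R_{n−1}` if `N_k^W < n ≤ N_{k+1}^E` for some `k`.  Then the increments
`(X_n − X_{n−1})_{n≥1}` are i.i.d., each uniform on `{−1, 0, 1}`; in particular the process
`X` has the same law as the random walk `L`. -/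
theorem stmt_1
    {Ω : Type*} [MeasurableSpace Ω] (P : Measure Ω) [IsProbabilityMeasure P]
    (ξ : ℕ → Ω → ℤ × ℤ)
    (hξmeas : ∀ j, Measurable (ξ j))
    (hξindep : iIndepFun (fun j : ℕ => ξ (j + 1)) P)
    (hξlaw : ∀ j, 1 ≤ j → Measure.map (ξ j) P
      = (3 : ℝ≥0∞)⁻¹ • (Measure.dirac ((1 : ℤ), (0 : ℤ))
          + Measure.dirac ((0 : ℤ), (-1 : ℤ)) + Measure.dirac ((-1 : ℤ), (1 : ℤ))))
    (L R : Ω → ℕ → ℤ)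
    (hL : ∀ ω n, L ω n = ∑ j ∈ Finset.Icc 1 n, (ξ j ω).1)
    (hR : ∀ ω n, R ω n = ∑ j ∈ Finset.Icc 1 n, (ξ j ω).2)
    (X : Ω → ℕ → ℤ) (NE NW : Ω → ℕ → ℕ∞)
    (hX0 : ∀ ω, X ω 0 = 0)
    (hNE1 : ∀ ω, NE ω 1 = 0)
    (hNW : ∀ ω k, 1 ≤ k →
      NW ω k = sInf {m : ℕ∞ | ∃ n : ℕ, m = (n : ℕ∞) ∧ NE ω k ≤ (n : ℕ∞) ∧ X ω n = 1})
    (hNE : ∀ ω k, 1 ≤ k →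
      NE ω (k + 1) = sInf {m : ℕ∞ | ∃ n : ℕ, m = (n : ℕ∞) ∧ NW ω k ≤ (n : ℕ∞) ∧ X ω n = 0})
    (hXW : ∀ ω n, (∃ k, 1 ≤ k ∧ NE ω k < ((n + 1 : ℕ) : ℕ∞) ∧ ((n + 1 : ℕ) : ℕ∞) ≤ NW ω k) →
      X ω (n + 1) - X ω n = L ω n - L ω (n + 1))
    (hXE : ∀ ω n,
      (∃ k, 1 ≤ k ∧ NW ω k < ((n + 1 : ℕ) : ℕ∞) ∧ ((n + 1 : ℕ) : ℕ∞) ≤ NE ω (k + 1)) →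
      X ω (n + 1) - X ω n = R ω (n + 1) - R ω n) :
    -- the increments of `X` are independent, identically distributed, uniform on `{-1,0,1}`,
    iIndepFun (fun n ω => X ω (n + 1) - X ω n) P
    ∧ (∀ n : ℕ, Measure.map (fun ω => X ω (n + 1) - X ω n) P
        = (3 : ℝ≥0∞)⁻¹ • (Measure.dirac (-1 : ℤ) + Measure.dirac (0 : ℤ)
            + Measure.dirac (1 : ℤ)))
    -- and in particular the process `X` has the same law as the random walk `L`
    ∧ Measure.map (fun ω => X ω) P = Measure.map (fun ω => L ω) P := by
  classical
  set η : ℕ → Ω → ℤ × ℤ := fun j => ξ (j + 1) with hηdef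
  have hηmeas : ∀ j, Measurable (η j) := fun j => hξmeas (j + 1)
  have hηind : iIndepFun η P := hξindep
  -- increments of L and R
  have hLd : ∀ ω n, L ω n - L ω (n + 1) = -(ξ (n + 1) ω).1 := by
    intro ω n
    rw [hL, hL, Finset.sum_Icc_succ_top (Nat.le_add_left 1 n)]
    ring
  have hRd : ∀ ω n, R ω (n + 1) - R ω n = (ξ (n + 1) ω).2 := by
    intro ω n
    rw [hR, hR, Finset.sum_Icc_succ_top (Nat.le_add_left 1 n)]
    ring
  -- pointwise representation of the increments of X
  have hinc : ∀ ω n, X ω (n + 1) - X ω n = inc n (fun j => η j ω) := by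
    intro ω n
    refine increment_eq (a := fun j => η j ω) (hX0 ω) (hNE1 ω) (hNW ω) (hNE ω) ?_ ?_ n
    · intro m hm; rw [hXW ω m hm]; exact hLd ω m
    · intro m hm; rw [hXE ω m hm]; exact hRd ω m
  -- the one-point law computation
  have hlawcalc : ∀ (j : ℕ) (G : Set (ℤ × ℤ)),
      P ((ξ (j + 1)) ⁻¹' G) = (3 : ℝ≥0∞)⁻¹ *
        ((if ((1 : ℤ), (0 : ℤ)) ∈ G then 1 else 0) + (if ((0 : ℤ), (-1 : ℤ)) ∈ G then 1 else 0)
          + (if ((-1 : ℤ), (1 : ℤ)) ∈ G then 1 else 0)) := by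
    intro j G
    rw [← Measure.map_apply (hξmeas (j + 1)) MeasurableSet.of_discrete,
      hξlaw (j + 1) (Nat.le_add_left 1 j)]
    simp [Measure.smul_apply, Measure.add_apply, Measure.dirac_apply, Set.indicator_apply,
      smul_eq_mul, mul_add]
  -- uniformity of the increment functional of X
  have hunif : ∀ (n : ℕ) (v : ℕ → ℤ × ℤ) (d : ℤ),
      P ((η n) ⁻¹' {e | inc n (patch n v e) = d}) = w d := by
    intro n v d
    have hset : {e : ℤ × ℤ | inc n (patch n v e) = d}
        = {e : ℤ × ℤ | (if (run v n).1 then -e.1 else e.2) = d} := by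
      ext e
      have h1 : run (patch n v e) n = run v n :=
        run_congr fun j hj => by simp [patch, Nat.ne_of_lt hj]
      simp [inc, h1, patch]
    show P ((ξ (n + 1)) ⁻¹' _) = w d
    rw [hset, hlawcalc]
    cases hb : (run v n).1 <;>
      · simp only [Set.mem_setOf_eq, Bool.false_eq_true, Bool.true_eq_false, if_true, if_false]
        by_cases h1 : d = -1 <;> by_cases h2 : d = 0 <;> by_cases h3 : d = 1 <;>
          simp [w, h1, h2, h3, eq_comm]
  -- uniformity of the increment functional of L
  have hunif' : ∀ (n : ℕ) (v : ℕ → ℤ × ℤ) (d : ℤ),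
      P ((η n) ⁻¹' {e | (patch n v e n).1 = d}) = w d := by
    intro n v d
    have hset : {e : ℤ × ℤ | (patch n v e n).1 = d} = {e : ℤ × ℤ | e.1 = d} := by
      ext e; simp [patch]
    show P ((ξ (n + 1)) ⁻¹' _) = w d
    rw [hset, hlawcalc]
    simp only [Set.mem_setOf_eq]
    by_cases h1 : d = -1 <;> by_cases h2 : d = 0 <;> by_cases h3 : d = 1 <;>
      simp [w, h1, h2, h3, eq_comm]
  have hdep : ∀ (n : ℕ) (u v : ℕ → ℤ × ℤ), (∀ j, j ≤ n → u j = v j) → inc n u = inc n v :=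
    fun n u v h => inc_congr h
  have hdep' : ∀ (n : ℕ) (u v : ℕ → ℤ × ℤ), (∀ j, j ≤ n → u j = v j) → (u n).1 = (v n).1 :=
    fun n u v h => by rw [h n le_rfl]
  have hkey := key_prob P η hηmeas hηind (fun n u => inc n u) hdep hunif
  have hkey' := key_prob P η hηmeas hηind (fun n u => (u n).1) hdep' hunif'
  -- measurability
  have hDmeas : ∀ i, Measurable (fun ω => X ω (i + 1) - X ω i) := by
    intro i
    have h : (fun ω => X ω (i + 1) - X ω i) = fun ω => inc i (fun j => η j ω) :=
      funext fun ω => hinc ω i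
    rw [h]
    exact meas_F hηmeas hdep i
  have hD'meas : ∀ i, Measurable (fun ω => (ξ (i + 1) ω).1) :=
    fun i => measurable_fst.comp (hξmeas (i + 1))
  -- finite-dimensional singleton probabilities
  have hsing : ∀ (S : Finset ℕ) (t : ℕ → ℤ),
      P (⋂ i ∈ S, {ω | X ω (i + 1) - X ω i = t i}) = ∏ i ∈ S, w (t i) := by
    intro S t
    have hrw : (⋂ i ∈ S, {ω | X ω (i + 1) - X ω i = t i})
        = ⋂ i ∈ S, {ω | inc i (fun j => η j ω) = t i} := by
      ext ω; simp [hinc]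
    rw [hrw]
    exact hkey _ S (Finset.subset_range_sup_succ S) t
  have hsing' : ∀ (S : Finset ℕ) (t : ℕ → ℤ),
      P (⋂ i ∈ S, {ω | (ξ (i + 1) ω).1 = t i}) = ∏ i ∈ S, w (t i) := by
    intro S t
    exact hkey' _ S (Finset.subset_range_sup_succ S) t
  -- marginal laws
  have hwval : ∀ d : ℤ, ((3 : ℝ≥0∞)⁻¹ • (Measure.dirac (-1 : ℤ) + Measure.dirac (0 : ℤ)
      + Measure.dirac (1 : ℤ))) {d} = w d := by
    intro d
    by_cases h1 : d = -1 <;> by_cases h2 : d = 0 <;> by_cases h3 : d = 1 <;>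
      simp [w, Measure.smul_apply, Measure.add_apply, Measure.dirac_apply,
        Set.indicator_apply, smul_eq_mul, h1, h2, h3, eq_comm]
  have hmarg : ∀ i, Measure.map (fun ω => X ω (i + 1) - X ω i) P
      = (3 : ℝ≥0∞)⁻¹ • (Measure.dirac (-1 : ℤ) + Measure.dirac (0 : ℤ)
          + Measure.dirac (1 : ℤ)) := by
    intro i
    refine Measure.ext_of_singleton fun d => ?_
    rw [Measure.map_apply (hDmeas i) (measurableSet_singleton d), hwval d]
    have h : (fun ω => X ω (i + 1) - X ω i) ⁻¹' {d}
        = ⋂ j ∈ ({i} : Finset ℕ), {ω | X ω (j + 1) - X ω j = (fun _ => d) j} := by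
      ext ω; simp
    rw [h, hsing {i} (fun _ => d), Finset.prod_singleton]
  have hmarg' : ∀ i, Measure.map (fun ω => (ξ (i + 1) ω).1) P
      = (3 : ℝ≥0∞)⁻¹ • (Measure.dirac (-1 : ℤ) + Measure.dirac (0 : ℤ)
          + Measure.dirac (1 : ℤ)) := by
    intro i
    refine Measure.ext_of_singleton fun d => ?_
    rw [Measure.map_apply (hD'meas i) (measurableSet_singleton d), hwval d]
    have h : (fun ω => (ξ (i + 1) ω).1) ⁻¹' {d}
        = ⋂ j ∈ ({i} : Finset ℕ), {ω | (ξ (j + 1) ω).1 = (fun _ => d) j} := by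
      ext ω; simp
    rw [h, hsing' {i} (fun _ => d), Finset.prod_singleton]
  -- equality of the finite dimensional laws
  have hTDmeas : ∀ S : Finset ℕ,
      Measurable (fun ω (i : S) => X ω ((i : ℕ) + 1) - X ω (i : ℕ)) :=
    fun S => measurable_pi_lambda _ fun i => hDmeas i
  have hTD'meas : ∀ S : Finset ℕ, Measurable (fun ω (i : S) => (ξ ((i : ℕ) + 1) ω).1) :=
    fun S => measurable_pi_lambda _ fun i => hD'meas i
  have hmapS : ∀ S : Finset ℕ,
      Measure.map (fun ω (i : S) => X ω ((i : ℕ) + 1) - X ω (i : ℕ)) P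
        = Measure.map (fun ω (i : S) => (ξ ((i : ℕ) + 1) ω).1) P := by
    intro S
    refine Measure.ext_of_singleton fun v => ?_
    rw [Measure.map_apply (hTDmeas S) (measurableSet_singleton v),
      Measure.map_apply (hTD'meas S) (measurableSet_singleton v)]
    set t : ℕ → ℤ := fun i => if h : i ∈ S then v ⟨i, h⟩ else 0 with htdef
    have h1 : (fun ω (i : S) => X ω ((i : ℕ) + 1) - X ω (i : ℕ)) ⁻¹' {v}
        = ⋂ i ∈ S, {ω | X ω (i + 1) - X ω i = t i} := by
      ext ω
      simp only [Set.mem_preimage, Set.mem_singleton_iff, funext_iff, Set.mem_iInter,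
        Set.mem_setOf_eq, Subtype.forall, htdef]
      refine forall_congr' fun i => forall_congr' fun hi => ?_
      rw [dif_pos hi]
    have h2 : (fun ω (i : S) => (ξ ((i : ℕ) + 1) ω).1) ⁻¹' {v}
        = ⋂ i ∈ S, {ω | (ξ (i + 1) ω).1 = t i} := by
      ext ω
      simp only [Set.mem_preimage, Set.mem_singleton_iff, funext_iff, Set.mem_iInter,
        Set.mem_setOf_eq, Subtype.forall, htdef]
      refine forall_congr' fun i => forall_congr' fun hi => ?_
      rw [dif_pos hi]
    rw [h1, h2, hsing S t, hsing' S t]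
  -- independence of the increments of L
  have hind' : iIndepFun (fun n ω => (ξ (n + 1) ω).1) P :=
    hξindep.comp (fun _ => Prod.fst) (fun _ => measurable_fst)
  -- conclusion 1 : independence of the increments of X
  have hindX : iIndepFun (fun n ω => X ω (n + 1) - X ω n) P := by
    rw [iIndepFun_iff_measure_inter_preimage_eq_mul]
    intro S sets hsets
    have e1 : (⋂ i ∈ S, (fun ω => X ω (i + 1) - X ω i) ⁻¹' sets i)
        = (fun ω (i : S) => X ω ((i : ℕ) + 1) - X ω (i : ℕ)) ⁻¹' (Set.univ.pi fun i : S => sets i) := by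
      ext ω
      simp [Set.mem_pi, Subtype.forall]
    have e2 : (⋂ i ∈ S, (fun ω => (ξ (i + 1) ω).1) ⁻¹' sets i)
        = (fun ω (i : S) => (ξ ((i : ℕ) + 1) ω).1) ⁻¹' (Set.univ.pi fun i : S => sets i) := by
      ext ω
      simp [Set.mem_pi, Subtype.forall]
    have hpiT : MeasurableSet (Set.univ.pi fun i : S => sets i) :=
      MeasurableSet.univ_pi fun i => hsets i i.2
    rw [e1, ← Measure.map_apply (hTDmeas S) hpiT, hmapS S,
      Measure.map_apply (hTD'meas S) hpiT, ← e2,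
      hind'.measure_inter_preimage_eq_mul S hsets]
    refine Finset.prod_congr rfl fun i hi => ?_
    rw [← Measure.map_apply (hD'meas i) (hsets i hi),
      ← Measure.map_apply (hDmeas i) (hsets i hi), hmarg i, hmarg' i]
  refine ⟨hindX, hmarg, ?_⟩
  -- conclusion 3 : the processes have the same law
  have hDXmeas : Measurable (fun ω (n : ℕ) => X ω (n + 1) - X ω n) :=
    measurable_pi_lambda _ hDmeas
  have hDLmeas : Measurable (fun ω (n : ℕ) => (ξ (n + 1) ω).1) :=
    measurable_pi_lambda _ hD'meas
  have hpathlaw : Measure.map (fun ω (n : ℕ) => X ω (n + 1) - X ω n) P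
      = Measure.map (fun ω (n : ℕ) => (ξ (n + 1) ω).1) P := by
    haveI h1 := Measure.isProbabilityMeasure_map (μ := P) hDXmeas.aemeasurable
    haveI h2 := Measure.isProbabilityMeasure_map (μ := P) hDLmeas.aemeasurable
    refine ext_of_generate_finite (measurableCylinders fun _ : ℕ => ℤ)
      generateFrom_measurableCylinders.symm isPiSystem_measurableCylinders ?_ (by simp)
    intro s hs
    obtain ⟨S, T, hT, rfl⟩ := (mem_measurableCylinders s).mp hs
    rw [Measure.map_apply hDXmeas (hT.cylinder), Measure.map_apply hDLmeas (hT.cylinder)]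
    have e1 : (fun ω (n : ℕ) => X ω (n + 1) - X ω n) ⁻¹' cylinder S T
        = (fun ω (i : S) => X ω ((i : ℕ) + 1) - X ω (i : ℕ)) ⁻¹' T := rfl
    have e2 : (fun ω (n : ℕ) => (ξ (n + 1) ω).1) ⁻¹' cylinder S T
        = (fun ω (i : S) => (ξ ((i : ℕ) + 1) ω).1) ⁻¹' T := rfl
    rw [e1, e2, ← Measure.map_apply (hTDmeas S) hT, ← Measure.map_apply (hTD'meas S) hT,
      hmapS S]
  have hcs : Measurable (fun u : ℕ → ℤ => fun n => ∑ j ∈ Finset.range n, u j) :=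
    measurable_pi_lambda _ fun n => Finset.measurable_sum _ fun j _ => measurable_pi_apply j
  have hXrw : (fun ω => X ω)
      = (fun u : ℕ → ℤ => fun n => ∑ j ∈ Finset.range n, u j)
        ∘ (fun ω (n : ℕ) => X ω (n + 1) - X ω n) := by
    funext ω
    funext n
    simp only [Function.comp_apply]
    rw [Finset.sum_range_sub (fun j => X ω j) n, hX0 ω, sub_zero]
  have hLrw : (fun ω => L ω)
      = (fun u : ℕ → ℤ => fun n => ∑ j ∈ Finset.range n, u j)
        ∘ (fun ω (n : ℕ) => (ξ (n + 1) ω).1) := by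
    funext ω
    funext n
    simp only [Function.comp_apply]
    rw [hL, ← Finset.Ico_add_one_right_eq_Icc, Finset.sum_Ico_eq_sum_range]
    simp [Nat.add_comm]
  rw [hXrw, hLrw, ← Measure.map_map hcs hDXmeas, ← Measure.map_map hcs hDLmeas, hpathlaw]
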